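/- Let K be a local field of characteristic (0,p) with valuation ring 𝒪_K, let r ≥ 0 and n ≥ 1 be integers, and let 0 → M₁ → M → M₂ → 0 be an exact sequence of 𝒪_K-modules in which M₁ is finite free of rank r and M₂ is killed by p^n. Then there exists an isomorphism of 𝒪_K-modules M ≅ 𝒪_K^{⊕r} ⊕ T, where T is killed by p^n. -/

import Mathlib

/-- Let `𝒪` be the valuation ring of a local field of characteristic
`(0,p)` (a complete discrete valuation ring of characteristic `0` in which `p` is a
nonzero nonunit).  Given an exact sequence `0 → M₁ → M → M₂ → 0` of `𝒪`-modules with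
`M₁` finite free of rank `r` and `M₂` killed by `pⁿ` (`n ≥ 1`), there is an isomorphism
`M ≅ 𝒪^r ⊕ T` with `T` killed by `pⁿ`. -/
theorem exists_free_torsion_decomposition
    (p : ℕ) (hp : p.Prime)
    (O : Type*) [CommRing O] [IsDomain O] [IsDiscreteValuationRing O] [CharZero O]
    (hpnonunit : ¬ IsUnit (p : O))
    (hcomplete : IsAdicComplete (IsLocalRing.maximalIdeal O) O)
    (r n : ℕ) (hn : 1 ≤ n)
    (M₁ M M₂ : Type*) [AddCommGroup M₁] [Module O M₁] [AddCommGroup M] [Module O M]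
    [AddCommGroup M₂] [Module O M₂]
    (f : M₁ →ₗ[O] M) (g : M →ₗ[O] M₂)
    (hf : Function.Injective f) (hg : Function.Surjective g)
    (hfg : LinearMap.range f = LinearMap.ker g)
    (e₁ : M₁ ≃ₗ[O] (Fin r → O))
    (h₂ : ∀ x : M₂, ((p : O) ^ n) • x = 0) :
    ∃ T : Submodule O M, (∀ x ∈ T, ((p : O) ^ n) • x = 0) ∧
      Nonempty (M ≃ₗ[O] ((Fin r → O) × T)) := by
  set pn : O := (p : O) ^ n with hpn
  have hpn0 : pn ≠ 0 := pow_ne_zero _ (Nat.cast_ne_zero.mpr hp.ne_zero)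
  -- M₁ is torsion-free
  have htf : ∀ m : M₁, pn • m = 0 → m = 0 := by
    intro m hm
    have : pn • e₁ m = 0 := by rw [← map_smul, hm, map_zero]
    have := smul_eq_zero.mp this
    rcases this with h | h
    · exact absurd h hpn0
    · exact e₁.injective (by simpa using h)
  -- p^n • x lands in range f
  have hmem : ∀ x : M, pn • x ∈ LinearMap.range f := by
    intro x
    rw [hfg, LinearMap.mem_ker, map_smul, h₂]
  -- the map h : M → M₁ with f (h x) = pn • x
  let sm : M →ₗ[O] M := pn • LinearMap.id
  let h : M →ₗ[O] M₁ :=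
    (LinearEquiv.ofInjective f hf).symm.toLinearMap ∘ₗ
      LinearMap.codRestrict (LinearMap.range f) sm hmem
  have hfh : ∀ x : M, f (h x) = pn • x := by
    intro x
    have := (LinearEquiv.ofInjective f hf).apply_symm_apply
      ⟨pn • x, hmem x⟩
    have : (((LinearEquiv.ofInjective f hf)
        ((LinearEquiv.ofInjective f hf).symm ⟨pn • x, hmem x⟩)) : M) = pn • x := by
      rw [this]
    simpa [h, sm, LinearEquiv.ofInjective_apply] using this
  set T : Submodule O M := Submodule.torsionBy O M pn with hT
  -- h' : M → (Fin r → O)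
  let h' : M →ₗ[O] (Fin r → O) := e₁.toLinearMap ∘ₗ h
  have hker : LinearMap.ker h' = T := by
    ext x
    simp only [LinearMap.mem_ker, h', LinearMap.coe_comp, Function.comp_apply,
      LinearEquiv.coe_coe, EmbeddingLike.map_eq_zero_iff]
    constructor
    · intro hx
      have : f (h x) = 0 := by rw [hx, map_zero]
      rw [hfh] at this
      exact (Submodule.mem_torsionBy_iff _ _).mpr this
    · intro hx
      have hx' : pn • x = 0 := hx
      apply hf
      rw [hfh, hx', map_zero]
  -- N' := range h'
  set N' : Submodule O (Fin r → O) := LinearMap.range h' with hN'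
  haveI : IsNoetherianRing O := inferInstance
  haveI : Module.Finite O N' := inferInstance
  haveI : Module.Free O N' := inferInstance
  -- injection M₁ → N'
  have hle : ∀ x : M₁, h' (f x) ∈ N' := fun x => ⟨f x, rfl⟩
  let j : M₁ →ₗ[O] N' := LinearMap.codRestrict N' (h' ∘ₗ f) hle
  have hj : Function.Injective j := by
    intro a b hab
    have : h' (f a) = h' (f b) := congrArg Subtype.val hab
    have h1 : h (f a) = h (f b) := e₁.injective this
    have : f (h (f a)) = f (h (f b)) := congrArg f h1
    rw [hfh, hfh] at this
    have : f (pn • a) = f (pn • b) := by rwa [map_smul, map_smul]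
    have := hf this
    have := sub_eq_zero.mpr this
    rw [← smul_sub] at this
    have := htf _ this
    exact sub_eq_zero.mp this
  have hrank1 : r ≤ Module.finrank O N' := by
    calc r = Module.finrank O (Fin r → O) := (Module.finrank_fin_fun O).symm
    _ = Module.finrank O M₁ := (LinearEquiv.finrank_eq e₁).symm
    _ ≤ Module.finrank O N' := LinearMap.finrank_le_finrank_of_injective hj
  have hrank2 : Module.finrank O N' ≤ r := by
    have := Submodule.finrank_le N'
    rwa [Module.finrank_fin_fun] at this
  have hrank : Module.finrank O N' = r := le_antisymm hrank2 hrank1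
  -- N' ≃ Fin r → O
  let b := Module.Free.chooseBasis O N'
  have hcard : Fintype.card (Module.Free.ChooseBasisIndex O N') = r := by
    rw [← Module.finrank_eq_card_chooseBasisIndex, hrank]
  let eι : Module.Free.ChooseBasisIndex O N' ≃ Fin r := Fintype.equivFinOfCardEq hcard
  let eN : N' ≃ₗ[O] (Fin r → O) :=
    b.equivFun.trans (LinearEquiv.funCongrLeft O O eι.symm)
  -- surjection G : M → Fin r → O with kernel T
  let Gm : M →ₗ[O] (Fin r → O) := eN.toLinearMap ∘ₗ h'.rangeRestrict
  have hGsurj : Function.Surjective Gm := by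
    apply Function.Surjective.comp eN.surjective
    exact h'.surjective_rangeRestrict
  have hGker : LinearMap.ker Gm = T := by
    rw [← hker]
    ext x
    simp [Gm, LinearMap.mem_ker, Subtype.ext_iff]
  have hexact : Function.Exact T.subtype Gm := by
    rw [LinearMap.exact_iff, hGker, Submodule.range_subtype]
  obtain ⟨l, hl⟩ := Module.projective_lifting_property Gm LinearMap.id hGsurj
  have hsplit : Gm ∘ₗ l = LinearMap.id := hl
  let e := (hexact.splitSurjectiveEquiv T.injective_subtype ⟨l, hsplit⟩).1
  refine ⟨T, fun x hx => hx, ⟨e.trans (LinearEquiv.prodComm O _ _)⟩⟩
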